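/- Let n ≥ 1, 1 ≤ k ≤ n and 1 ≤ d ≤ min(k, n+1−k), and let x ∈ S_{n+1} be the block-swap permutation. Let v ∈ S_{n+1} satisfy v(j) < v(j+1) for all j ∈ {1,…,n} with j ≠ k, and suppose inv(v∘x) = inv(v) − d². Then (v∘x)(i) = v(i) for all i ∉ {k−d+1,…,k+d}, and the sequence (v∘x)(k−d+1) < (v∘x)(k−d+2) < ⋯ < (v∘x)(k+d) is strictly increasing and is a rearrangement of the values v(k−d+1),…,v(k+d); that is, v∘x is obtained from v by sorting the values v(k−d+1),…,v(k+d) into increasing order. -/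

import Mathlib

/-- The inversion number of a permutation `w` of `{1, …, n+1}` (modelled as a permutation
of `ℕ` supported on `{1, …, n+1}`): the number of pairs `1 ≤ i < j ≤ n+1` with
`w(i) > w(j)`.  It equals the Coxeter length of `w` in `S_{n+1}`. -/
def invNum (n : ℕ) (w : Equiv.Perm ℕ) : ℕ :=
  ((Finset.Icc 1 (n + 1) ×ˢ Finset.Icc 1 (n + 1)).filter
    (fun p => p.1 < p.2 ∧ w p.2 < w p.1)).card

/-- **(Remark 2.16.)**  If `v` is a minimal length coset representative for
`Gr(k, n+1)` and `inv(v∘x) = inv(v) − d²` for the block-swap permutation `x`, then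
`v∘x` agrees with `v` outside `{k−d+1, …, k+d}` and is obtained from `v` by sorting the
values `v(k−d+1), …, v(k+d)` into increasing order. -/
theorem blockSwap_sorts_values (n k d : ℕ) (hn : 1 ≤ n) (hk1 : 1 ≤ k)
    (hkn : k ≤ n) (hd1 : 1 ≤ d) (hdk : d ≤ k) (hdn : d ≤ n + 1 - k)
    (x : Equiv.Perm ℕ)
    (hx : ∀ i, x i = if k - d + 1 ≤ i ∧ i ≤ k then i + d
      else if k + 1 ≤ i ∧ i ≤ k + d then i - d else i)
    (v : Equiv.Perm ℕ)
    (hvfix : ∀ i, i ∉ Finset.Icc 1 (n + 1) → v i = i)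
    (hvgrass : ∀ j, 1 ≤ j → j ≤ n → j ≠ k → v j < v (j + 1))
    (hlen : (invNum n (v * x) : ℤ) = (invNum n v : ℤ) - d ^ 2) :
    (∀ i, i ∉ Finset.Icc (k - d + 1) (k + d) → (v * x) i = v i) ∧
    (∀ i, k - d + 1 ≤ i → i < k + d → (v * x) i < (v * x) (i + 1)) ∧
    (Finset.Icc (k - d + 1) (k + d)).image ⇑(v * x) =
      (Finset.Icc (k - d + 1) (k + d)).image ⇑v := by
  have hkdn : k + d ≤ n + 1 := by omega
  -- computation rules for x
  have hxL : ∀ i, k - d + 1 ≤ i → i ≤ k → x i = i + d := by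
    intro i h1 h2; rw [hx]; simp [h1, h2]
  have hxR : ∀ i, k + 1 ≤ i → i ≤ k + d → x i = i - d := by
    intro i h1 h2; rw [hx]; split_ifs with h h'
    · omega
    · rfl
    · omega
  have hxO : ∀ i, ¬(k - d + 1 ≤ i ∧ i ≤ k + d) → x i = i := by
    intro i h; rw [hx]; split_ifs with h1 h2 <;> omega
  have hxx : ∀ i, x (x i) = i := by
    intro i
    by_cases hL : k - d + 1 ≤ i ∧ i ≤ k
    · rw [hxL i hL.1 hL.2, hxR (i + d) (by omega) (by omega)]; omega
    · by_cases hR : k + 1 ≤ i ∧ i ≤ k + d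
      · rw [hxR i hR.1 hR.2, hxL (i - d) (by omega) (by omega)]; omega
      · rw [hxO i (by omega), hxO i (by omega)]
  have hxS : ∀ i, 1 ≤ i → i ≤ n + 1 → 1 ≤ x i ∧ x i ≤ n + 1 := by
    intro i h1 h2
    by_cases hL : k - d + 1 ≤ i ∧ i ≤ k
    · rw [hxL i hL.1 hL.2]; omega
    · by_cases hR : k + 1 ≤ i ∧ i ≤ k + d
      · rw [hxR i hR.1 hR.2]; omega
      · rw [hxO i (by omega)]; omega
  have hxB : ∀ i, k - d + 1 ≤ i → i ≤ k + d → k - d + 1 ≤ x i ∧ x i ≤ k + d := by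
    intro i h1 h2
    by_cases hL : i ≤ k
    · rw [hxL i h1 hL]; omega
    · rw [hxR i (by omega) h2]; omega
  have hordrev : ∀ a b, k - d + 1 ≤ a → a ≤ k → k + 1 ≤ b → b ≤ k + d → x b < x a := by
    intro a b h1 h2 h3 h4
    rw [hxL a h1 h2, hxR b h3 h4]; omega
  have hxmono : ∀ a b, a < b →
      ¬(k - d + 1 ≤ a ∧ a ≤ k ∧ k + 1 ≤ b ∧ b ≤ k + d) → x a < x b := by
    intro a b hab hn'
    by_cases haL : k - d + 1 ≤ a ∧ a ≤ k
    · rw [hxL a haL.1 haL.2]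
      by_cases hbL : k - d + 1 ≤ b ∧ b ≤ k
      · rw [hxL b hbL.1 hbL.2]; omega
      · rw [hxO b (by omega)]; omega
    · by_cases haR : k + 1 ≤ a ∧ a ≤ k + d
      · rw [hxR a haR.1 haR.2]
        by_cases hbR : k + 1 ≤ b ∧ b ≤ k + d
        · rw [hxR b hbR.1 hbR.2]; omega
        · rw [hxO b (by omega)]; omega
      · rw [hxO a (by omega)]
        by_cases hbL : k - d + 1 ≤ b ∧ b ≤ k
        · rw [hxL b hbL.1 hbL.2]; omega
        · by_cases hbR : k + 1 ≤ b ∧ b ≤ k + d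
          · rw [hxR b hbR.1 hbR.2]; omega
          · rw [hxO b (by omega)]; omega
  have hord : ∀ a b,
      ¬((k - d + 1 ≤ a ∧ a ≤ k ∧ k + 1 ≤ b ∧ b ≤ k + d) ∨
        (k - d + 1 ≤ b ∧ b ≤ k ∧ k + 1 ≤ a ∧ a ≤ k + d)) →
      (a < b ↔ x a < x b) := by
    intro a b hn'
    have hA : ¬(k - d + 1 ≤ a ∧ a ≤ k ∧ k + 1 ≤ b ∧ b ≤ k + d) := fun h => hn' (Or.inl h)
    have hB : ¬(k - d + 1 ≤ b ∧ b ≤ k ∧ k + 1 ≤ a ∧ a ≤ k + d) := fun h => hn' (Or.inr h)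
    constructor
    · exact fun h => hxmono a b h hA
    · intro h
      rcases lt_trichotomy a b with h' | h' | h'
      · exact h'
      · subst h'; exact absurd h (lt_irrefl _)
      · exact absurd (hxmono b a h' hB) (by omega)
  -- the key junction inequality
  have hjunction : v (k + d) < v (k - d + 1) := by
    set S2 := Finset.Icc 1 (n + 1) ×ˢ Finset.Icc 1 (n + 1) with hS2def
    set cross : ℕ × ℕ → Prop := fun p =>
      (k - d + 1 ≤ p.1 ∧ p.1 ≤ k ∧ k + 1 ≤ p.2 ∧ p.2 ≤ k + d) ∨
      (k - d + 1 ≤ p.2 ∧ p.2 ≤ k ∧ k + 1 ≤ p.1 ∧ p.1 ≤ k + d) with hcross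
    -- step A : reindex invNum (v*x)
    have stepA : invNum n (v * x) =
        (S2.filter fun p => x p.1 < x p.2 ∧ v p.2 < v p.1).card := by
      unfold invNum
      apply Finset.card_bij' (fun p _ => (x p.1, x p.2)) (fun p _ => (x p.1, x p.2))
      · intro p hp
        rw [Finset.mem_filter] at hp ⊢
        simp only [hS2def, Finset.mem_filter, Finset.mem_product, Finset.mem_Icc,
          Equiv.Perm.mul_apply] at hp ⊢
        refine ⟨⟨hxS p.1 hp.1.1.1 hp.1.1.2, hxS p.2 hp.1.2.1 hp.1.2.2⟩, ?_, hp.2.2⟩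
        rw [hxx, hxx]; exact hp.2.1
      · intro p hp
        rw [Finset.mem_filter] at hp ⊢
        simp only [hS2def, Finset.mem_filter, Finset.mem_product, Finset.mem_Icc,
          Equiv.Perm.mul_apply] at hp ⊢
        refine ⟨⟨hxS p.1 hp.1.1.1 hp.1.1.2, hxS p.2 hp.1.2.1 hp.1.2.2⟩, hp.2.1, ?_⟩
        rw [hxx, hxx]; exact hp.2.2
      · intro p _; simp [hxx]
      · intro p _; simp [hxx]
    -- split both counts by the crossing predicate
    have split1 := Finset.card_filter_add_card_filter_not
      (s := S2.filter fun p => p.1 < p.2 ∧ v p.2 < v p.1) (p := cross)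
    have split2 := Finset.card_filter_add_card_filter_not
      (s := S2.filter fun p => x p.1 < x p.2 ∧ v p.2 < v p.1) (p := cross)
    simp only [Finset.filter_filter] at split1 split2
    -- identify the four pieces
    have E3 : (S2.filter fun p => (x p.1 < x p.2 ∧ v p.2 < v p.1) ∧ ¬cross p) =
        (S2.filter fun p => (p.1 < p.2 ∧ v p.2 < v p.1) ∧ ¬cross p) := by
      apply Finset.filter_congr
      intro p _
      have := hord p.1 p.2
      constructor
      · rintro ⟨⟨h1, h2⟩, h3⟩; exact ⟨⟨(this h3).2 h1, h2⟩, h3⟩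
      · rintro ⟨⟨h1, h2⟩, h3⟩; exact ⟨⟨(this h3).1 h1, h2⟩, h3⟩
    have E1 : (S2.filter fun p => (p.1 < p.2 ∧ v p.2 < v p.1) ∧ cross p) =
        (S2.filter fun p =>
          ((k - d + 1 ≤ p.1 ∧ p.1 ≤ k) ∧ (k + 1 ≤ p.2 ∧ p.2 ≤ k + d)) ∧ v p.2 < v p.1) := by
      apply Finset.filter_congr
      intro p _
      rw [hcross]
      constructor
      · rintro ⟨⟨h1, h2⟩, h3 | h3⟩
        · exact ⟨⟨⟨h3.1, h3.2.1⟩, ⟨h3.2.2.1, h3.2.2.2⟩⟩, h2⟩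
        · omega
      · rintro ⟨⟨h1, h2⟩, h3⟩
        exact ⟨⟨by omega, h3⟩, Or.inl (by omega)⟩
    have E2 : (S2.filter fun p => (x p.1 < x p.2 ∧ v p.2 < v p.1) ∧ cross p) =
        (S2.filter fun p =>
          ((k + 1 ≤ p.1 ∧ p.1 ≤ k + d) ∧ (k - d + 1 ≤ p.2 ∧ p.2 ≤ k)) ∧ v p.2 < v p.1) := by
      apply Finset.filter_congr
      intro p _
      rw [hcross]
      constructor
      · rintro ⟨⟨h1, h2⟩, h3 | h3⟩
        · exact absurd (hordrev p.1 p.2 h3.1 h3.2.1 h3.2.2.1 h3.2.2.2) (by omega)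
        · exact ⟨⟨⟨h3.2.2.1, h3.2.2.2⟩, ⟨h3.1, h3.2.1⟩⟩, h2⟩
      · rintro ⟨⟨h1, h2⟩, h3⟩
        exact ⟨⟨hordrev p.2 p.1 h2.1 h2.2 h1.1 h1.2, h3⟩, Or.inr (by omega)⟩
    -- the crossing domain
    set D := S2.filter (fun p : ℕ × ℕ =>
      (k - d + 1 ≤ p.1 ∧ p.1 ≤ k) ∧ (k + 1 ≤ p.2 ∧ p.2 ≤ k + d)) with hD
    have hDcard : D.card = d * d := by
      have : D = Finset.Icc (k - d + 1) k ×ˢ Finset.Icc (k + 1) (k + d) := by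
        ext ⟨a, b⟩
        simp only [hD, hS2def, Finset.mem_filter, Finset.mem_product, Finset.mem_Icc]
        omega
      rw [this, Finset.card_product, Nat.card_Icc, Nat.card_Icc]
      have e1 : k + 1 - (k - d + 1) = d := by omega
      have e2 : k + d + 1 - (k + 1) = d := by omega
      rw [e1, e2]
    set N := (D.filter fun p => v p.2 < v p.1).card with hN
    set M := (D.filter fun p => v p.1 < v p.2).card with hM
    have hNM : N + M = d * d := by
      have := Finset.card_filter_add_card_filter_not
        (s := D) (p := fun p => v p.2 < v p.1)
      rw [← hDcard]
      rw [← this]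
      congr 1
      rw [hM]
      congr 1
      apply Finset.filter_congr
      intro p hp
      simp only [hD, Finset.mem_filter] at hp
      have hne : v p.1 ≠ v p.2 := by
        intro h
        have := v.injective h
        omega
      constructor
      · intro h; omega
      · intro h; omega
    -- M counts the second crossing piece
    have hMeq : (S2.filter fun p =>
        ((k + 1 ≤ p.1 ∧ p.1 ≤ k + d) ∧ (k - d + 1 ≤ p.2 ∧ p.2 ≤ k)) ∧ v p.2 < v p.1).card
        = M := by
      rw [hM, hD]
      rw [Finset.filter_filter]
      refine Finset.card_bij' (fun p _ => (p.2, p.1)) (fun p _ => (p.2, p.1))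
        ?_ ?_ (fun p _ => by simp) (fun p _ => by simp)
      · intro p hp
        simp only [Finset.mem_filter, Finset.mem_product, Finset.mem_Icc, hS2def] at hp ⊢
        exact ⟨⟨hp.1.2, hp.1.1⟩, ⟨hp.2.1.2, hp.2.1.1⟩, hp.2.2⟩
      · intro p hp
        simp only [Finset.mem_filter, Finset.mem_product, Finset.mem_Icc, hS2def] at hp ⊢
        exact ⟨⟨hp.1.2, hp.1.1⟩, ⟨hp.2.1.2, hp.2.1.1⟩, hp.2.2⟩
    -- also N is the first crossing piece (by filter_filter)
    have hNeq : (S2.filter fun p =>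
        ((k - d + 1 ≤ p.1 ∧ p.1 ≤ k) ∧ (k + 1 ≤ p.2 ∧ p.2 ≤ k + d)) ∧ v p.2 < v p.1).card
        = N := by
      rw [hN, hD, Finset.filter_filter]
    -- assemble the arithmetic
    have hinv1 : invNum n v = N +
        (S2.filter fun p => (p.1 < p.2 ∧ v p.2 < v p.1) ∧ ¬cross p).card := by
      unfold invNum
      rw [← split1, E1, hNeq]
    have hinv2 : invNum n (v * x) = M +
        (S2.filter fun p => (p.1 < p.2 ∧ v p.2 < v p.1) ∧ ¬cross p).card := by
      rw [stepA, ← split2, E2, hMeq, E3]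
    have hNval : N = d * d := by
      rw [hinv1, hinv2] at hlen
      have hd2 : (d : ℤ) ^ 2 = ((d * d : ℕ) : ℤ) := by push_cast; ring
      rw [hd2] at hlen
      push_cast at hlen
      omega
    -- so the filter is everything
    have hfull : D.filter (fun p => v p.2 < v p.1) = D := by
      apply Finset.eq_of_subset_of_card_le (Finset.filter_subset _ _)
      rw [← hN, hNval, hDcard]
    have hmem : ((k - d + 1 : ℕ), (k + d : ℕ)) ∈ D := by
      simp only [hD, hS2def, Finset.mem_filter, Finset.mem_product, Finset.mem_Icc]
      omega
    rw [← hfull] at hmem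
    exact (Finset.mem_filter.mp hmem).2
  refine ⟨?_, ?_, ?_⟩
  · intro i hi
    simp only [Finset.mem_Icc] at hi
    rw [Equiv.Perm.mul_apply, hxO i (by omega)]
  · intro i h1 h2
    rw [Equiv.Perm.mul_apply, Equiv.Perm.mul_apply]
    by_cases h : i + 1 ≤ k
    · rw [hxL i h1 (by omega), hxL (i + 1) (by omega) h]
      have e : i + 1 + d = i + d + 1 := by omega
      rw [e]
      exact hvgrass (i + d) (by omega) (by omega) (by omega)
    · by_cases h' : i = k
      · subst h'
        rw [hxL i (by omega) le_rfl, hxR (i + 1) le_rfl (by omega)]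
        have e : i + 1 - d = i - d + 1 := by omega
        rw [e]
        exact hjunction
      · have hik : k + 1 ≤ i := by omega
        rw [hxR i hik (by omega), hxR (i + 1) (by omega) (by omega)]
        have e : i + 1 - d = i - d + 1 := by omega
        rw [e]
        exact hvgrass (i - d) (by omega) (by omega) (by omega)
  · have hcoe : ⇑(v * x) = ⇑v ∘ ⇑x := rfl
    rw [hcoe, ← Finset.image_image]
    congr 1
    ext a
    simp only [Finset.mem_image, Finset.mem_Icc]
    constructor
    · rintro ⟨b, hb, rfl⟩
      exact hxB b hb.1 hb.2
    · intro ha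
      exact ⟨x a, hxB a ha.1 ha.2, hxx a⟩
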